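/- Let $\beta_i > 0$ for $i = 1, \dots, m$, let $\ell_i(x) = (e^{\beta_i x} - 1)/\beta_i$ be the exponential loss functions, $x^0 \in \prod_{i=1}^m (-1/\beta_i, +\infty)$, and $C \subseteq \mathbb{R}^m$ closed convex upper set with $0 \in \partial C$. Then the entropic risk measure $R^{\mathrm{ent}}(X) = \{z \in \mathbb{R}^m \mid \mathbb{E}[\ell(-X - z)] \in x^0 - C\}$ satisfies $R^{\mathrm{ent}}(X) = \rho^{\mathrm{ent}}(X) + \tilde C$ for every $X \in L^\infty_m$, where $\rho^{\mathrm{ent}}(X) = \big(\frac{1}{\beta_1}\log \mathbb{E}[e^{-\beta_1 X_1}], \dots, \frac{1}{\beta_m}\log \mathbb{E}[e^{-\beta_m X_m}]\big)^{\mathsf{T}}$ and $\tilde C = \{z \in \mathbb{R}^m \mid z_i = -\frac{1}{\beta_i}\log(1 + \beta_i(x^0_i - c_i)),\ i = 1,\dots,m,\ c \in C \cap \prod_{j=1}^m (-\infty, x^0_j + 1/\beta_j)\}$. -/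

import Mathlib

open MeasureTheory Set
open scoped Pointwise

/-- The set-valued entropic risk measure decomposes as
`R^ent(X) = ρ^ent(X) + C̃`, where `ρ^ent(X)_i = (1/βᵢ) log E[exp(-βᵢ Xᵢ)]` and
`C̃` is a fixed set determined by `β`, `x⁰` and `C`. -/
theorem entropic_risk_measure_decomposition {Ω : Type*} [MeasurableSpace Ω]
    (μ : Measure Ω) [IsProbabilityMeasure μ] (m : ℕ)
    (β x0 : Fin m → ℝ) (hβ : ∀ i, 0 < β i) (hx0 : ∀ i, -1 / β i < x0 i)
    (C : Set (Fin m → ℝ)) (hCcl : IsClosed C) (hCco : Convex ℝ C)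
    (hCup : C + {p : Fin m → ℝ | ∀ i, 0 ≤ p i} ⊆ C)
    (h0C : (0 : Fin m → ℝ) ∈ frontier C)
    (X : Ω → Fin m → ℝ) (hX : Measurable X) (hXb : ∃ K, ∀ ω, ‖X ω‖ ≤ K) :
    -- `R^ent(X) = {z | E[ℓ(-X - z)] ∈ x⁰ - C}` for the exponential loss
    {z : Fin m → ℝ |
        x0 - (fun i => ∫ ω, (Real.exp (β i * (-(X ω i) - z i)) - 1) / β i ∂μ) ∈ C}
      = (fun c => (fun i => (1 / β i) * Real.log (∫ ω, Real.exp (-(β i) * X ω i) ∂μ)) + c)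
          '' {z : Fin m → ℝ | ∃ c ∈ C, (∀ j, c j < x0 j + 1 / β j) ∧
                ∀ i, z i = -(1 / β i) * Real.log (1 + β i * (x0 i - c i))} := by
  obtain ⟨K, hK⟩ := hXb
  set E : Fin m → ℝ := fun i => ∫ ω, Real.exp (-(β i) * X ω i) ∂μ with hE
  have hEdef : ∀ i, (∫ ω, Real.exp (-(β i) * X ω i) ∂μ) = E i := fun i => rfl
  have habs : ∀ (ω : Ω) i, |X ω i| ≤ K := by
    intro ω i
    have := norm_le_pi_norm (X ω) i
    rw [Real.norm_eq_abs] at this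
    exact this.trans (hK ω)
  have hmeas : ∀ i, Measurable fun ω => Real.exp (-(β i) * X ω i) := fun i =>
    Real.measurable_exp.comp (measurable_const.mul ((measurable_pi_apply i).comp hX))
  have hint : ∀ i, Integrable (fun ω => Real.exp (-(β i) * X ω i)) μ := by
    intro i
    refine ⟨(hmeas i).aestronglyMeasurable, ?_⟩
    apply MeasureTheory.HasFiniteIntegral.of_bounded (C := Real.exp (β i * K))
    filter_upwards with ω
    rw [Real.norm_eq_abs, abs_of_pos (Real.exp_pos _)]
    apply Real.exp_le_exp.2
    nlinarith [abs_le.1 (habs ω i), (hβ i).le]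
  have hEpos : ∀ i, 0 < E i := by
    intro i
    have hc : (∫ _ω, Real.exp (-(β i) * K) ∂μ) = Real.exp (-(β i) * K) := by simp
    have hle : Real.exp (-(β i) * K) ≤ E i := by
      rw [hE, ← hc]
      apply integral_mono (integrable_const _) (hint i)
      intro ω
      apply Real.exp_le_exp.2
      nlinarith [abs_le.1 (habs ω i), (hβ i).le]
    exact lt_of_lt_of_le (Real.exp_pos _) hle
  have hkey : ∀ (z : Fin m → ℝ) (i : Fin m),
      (∫ ω, (Real.exp (β i * (-(X ω i) - z i)) - 1) / β i ∂μ)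
        = (Real.exp (-(β i) * z i) * E i - 1) / β i := by
    intro z i
    have heq : ∀ ω : Ω, (Real.exp (β i * (-(X ω i) - z i)) - 1) / β i
        = (Real.exp (-(β i) * z i) * Real.exp (-(β i) * X ω i) - 1) / β i := by
      intro ω
      rw [← Real.exp_add]
      congr 3
      ring
    simp_rw [heq]
    rw [integral_div, integral_sub ((hint i).const_mul _) (integrable_const 1),
      integral_const_mul, integral_const]
    simp [hE]
  simp only [hkey, hEdef]
  ext z
  simp only [mem_setOf_eq, mem_image]
  constructor
  · intro hz
    refine ⟨fun i => z i - (1 / β i) * Real.log (E i),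
      ⟨x0 - fun i => (Real.exp (-(β i) * z i) * E i - 1) / β i, hz, ?_, ?_⟩, ?_⟩
    · intro j
      have hβj := hβ j
      have hT : 0 < Real.exp (-(β j) * z j) * E j := mul_pos (Real.exp_pos _) (hEpos j)
      simp only [Pi.sub_apply]
      rw [sub_lt_iff_lt_add]
      have key : (1 : ℝ) / β j + (Real.exp (-(β j) * z j) * E j - 1) / β j
          = (Real.exp (-(β j) * z j) * E j) / β j := by
        field_simp
        ring
      linarith [div_pos hT hβj, key]
    · intro i
      have hne : β i ≠ 0 := (hβ i).ne'
      simp only [Pi.sub_apply]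
      have h1 : x0 i - (x0 i - (Real.exp (-(β i) * z i) * E i - 1) / β i)
          = (Real.exp (-(β i) * z i) * E i - 1) / β i := by ring
      rw [h1]
      have h2 : 1 + β i * ((Real.exp (-(β i) * z i) * E i - 1) / β i)
          = Real.exp (-(β i) * z i) * E i := by field_simp; ring
      rw [h2, Real.log_mul (Real.exp_ne_zero _) (hEpos i).ne', Real.log_exp]
      field_simp
      ring
    · funext i
      simp only [Pi.add_apply]
      ring
  · rintro ⟨w, ⟨c, hcC, hclt, hw⟩, rfl⟩
    have heq : (x0 - fun i =>
        (Real.exp (-(β i) * (((fun i => (1 / β i) * Real.log (E i)) + w) i)) * E i - 1) / β i)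
        = c := by
      funext i
      simp only [Pi.sub_apply, Pi.add_apply]
      have hne : β i ≠ 0 := (hβ i).ne'
      have hpos : 0 < 1 + β i * (x0 i - c i) := by
        have h := hclt i
        have h2 : β i * (-(1 / β i)) < β i * (x0 i - c i) :=
          mul_lt_mul_of_pos_left (by linarith) (hβ i)
        have h3 : β i * (-(1 / β i)) = -1 := by field_simp
        linarith
      rw [hw i]
      have e1 : -(β i) * ((1 / β i) * Real.log (E i)
            + -(1 / β i) * Real.log (1 + β i * (x0 i - c i)))
          = (-Real.log (E i)) + Real.log (1 + β i * (x0 i - c i)) := by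
        field_simp
        ring
      rw [e1, Real.exp_add, Real.exp_neg, Real.exp_log (hEpos i), Real.exp_log hpos]
      field_simp [(hEpos i).ne']
      ring
    rw [heq]
    exact hcC
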